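/- For a connected simple graph G with at least 3 vertices and any subset U of V(G), the collection Δ^G_U = { E(G) \ E(N) : N a nucleus of G with U ⊆ V(N) } is closed under taking subsets, i.e., it is an abstract simplicial complex (where a nucleus of G is a connected subgraph N whose vertex set is a vertex cover of G). -/

import Mathlib

open SimpleGraph

/-- `Shade_v(F)`: edges of `G` with an endpoint connected to `v` by an `F`-path. -/
def Shade {V : Type*} (G : SimpleGraph V) (v : V) (F : Set (Sym2 V)) : Set (Sym2 V) :=
  {e ∈ G.edgeSet | ∃ u ∈ e, (SimpleGraph.fromEdgeSet F).Reachable u v}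

/-- The simplicial complex `A_v`. -/
def Avert {V : Type*} (G : SimpleGraph V) (v : V) : Set (Set (Sym2 V)) :=
  {F | F ⊆ G.edgeSet ∧ Shade G v F ⊂ G.edgeSet}

/-- Vertex set of the edge-induced subgraph `G_σ`. -/
def edgeVerts {V : Type*} (σ : Set (Sym2 V)) : Set V :=
  {u | ∃ e ∈ σ, u ∈ e}

/-- Connectedness of the edge-induced subgraph `G_σ`. -/
def edgeConnected {V : Type*} (σ : Set (Sym2 V)) : Prop :=
  σ.Nonempty ∧ ∀ u ∈ edgeVerts σ, ∀ w ∈ edgeVerts σ,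
    (SimpleGraph.fromEdgeSet σ).Reachable u w

/-- `X` is a vertex cover of `G`. -/
def IsVertexCover {V : Type*} (G : SimpleGraph V) (X : Set V) : Prop :=
  ∀ e ∈ G.edgeSet, ∃ u ∈ e, u ∈ X

/-- A nucleus of `G`: a connected subgraph whose vertex set is a vertex cover. -/
def IsNucleus {V : Type*} (G : SimpleGraph V) (N : G.Subgraph) : Prop :=
  N.Connected ∧ _root_.IsVertexCover G N.verts

/-- The `U`-nucleus complex `Δ^G_U`. -/
def nucleusComplex {V : Type*} (G : SimpleGraph V) (U : Set V) : Set (Set (Sym2 V)) :=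
  {S | ∃ N : G.Subgraph, IsNucleus G N ∧ U ⊆ N.verts ∧ S = G.edgeSet \ N.edgeSet}

theorem stmt_0 {V : Type*} [Fintype V] (G : SimpleGraph V) (hG : G.Connected)
    (h3 : 3 ≤ Fintype.card V) (U : Set V) :
    ∀ S ∈ nucleusComplex G U, ∀ T ⊆ S, T ∈ nucleusComplex G U := by
  rintro S ⟨N, ⟨hNc, hNcov⟩, hU, rfl⟩ T hTS
  set S := G.edgeSet \ N.edgeSet with hS
  -- new subgraph: add edges of S \ T to N
  classical
  refine ⟨{ verts := N.verts ∪ {u | ∃ e ∈ S \ T, u ∈ e},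
            Adj := fun u w => N.Adj u w ∨ (G.Adj u w ∧ s(u, w) ∈ S \ T),
            adj_sub := ?_, edge_vert := ?_, symm := ?_ }, ⟨?_, ?_⟩, ?_, ?_⟩
  · rintro u w (h | ⟨h, _⟩)
    · exact N.adj_sub h
    · exact h
  · rintro u w (h | ⟨h, he⟩)
    · exact Or.inl (N.edge_vert h)
    · exact Or.inr ⟨s(u, w), he, by simp⟩
  · constructor; rintro u w (h | ⟨h, he⟩)
    · exact Or.inl h.symm
    · exact Or.inr ⟨h.symm, by rwa [Sym2.eq_swap]⟩
  · -- connectedness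
    set N' : G.Subgraph :=
      { verts := N.verts ∪ {u | ∃ e ∈ S \ T, u ∈ e},
        Adj := fun u w => N.Adj u w ∨ (G.Adj u w ∧ s(u, w) ∈ S \ T),
        adj_sub := by
          rintro u w (h | ⟨h, _⟩)
          · exact N.adj_sub h
          · exact h
        edge_vert := by
          rintro u w (h | ⟨h, he⟩)
          · exact Or.inl (N.edge_vert h)
          · exact Or.inr ⟨s(u, w), he, by simp⟩
        symm := by
          constructor; rintro u w (h | ⟨h, he⟩)
          · exact Or.inl h.symm
          · exact Or.inr ⟨h.symm, by rwa [Sym2.eq_swap]⟩ } with hN'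
    have hle : N ≤ N' := ⟨fun u hu => Or.inl hu, fun u w h => Or.inl h⟩
    -- every vertex of N' is N'-reachable from some vertex of N
    have key : ∀ u (hu : u ∈ N'.verts), ∃ x, ∃ hx : x ∈ N.verts,
        N'.coe.Reachable ⟨u, hu⟩ ⟨x, Or.inl hx⟩ := by
      intro u hu
      rcases hu with hu | ⟨e, heST, hue⟩
      · exact ⟨u, hu, Reachable.refl _⟩
      · have heG : e ∈ G.edgeSet := heST.1.1
        obtain ⟨x, hxe, hxN⟩ := hNcov e heG
        by_cases hux : u = x
        · exact ⟨x, hxN, by cases hux; exact Reachable.refl _⟩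
        · -- e = s(u, x)
          have he : e = s(u, x) := by
            induction e with
            | h a b =>
              rcases Sym2.mem_iff.mp hue with rfl | rfl
              · rcases Sym2.mem_iff.mp hxe with rfl | rfl
                · exact absurd rfl hux
                · rfl
              · rcases Sym2.mem_iff.mp hxe with rfl | rfl
                · exact Sym2.eq_swap
                · exact absurd rfl hux
          have hGadj : G.Adj u x := by
            have := heG; rw [he] at this; exact this
          have hadj : N'.Adj u x := Or.inr ⟨hGadj, by rw [← he]; exact heST⟩
          exact ⟨x, hxN, (SimpleGraph.Subgraph.Adj.coe hadj).reachable⟩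
    rw [SimpleGraph.Subgraph.connected_iff]
    constructor
    · constructor
      intro a b
      obtain ⟨u, hu⟩ := a
      obtain ⟨w, hw⟩ := b
      obtain ⟨x, hx, hux⟩ := key u hu
      obtain ⟨y, hy, hwy⟩ := key w hw
      have hxy : N.coe.Reachable ⟨x, hx⟩ ⟨y, hy⟩ := hNc.preconnected _ _
      have hxy' : N'.coe.Reachable ⟨x, Or.inl hx⟩ ⟨y, Or.inl hy⟩ :=
        hxy.map (SimpleGraph.Subgraph.inclusion hle)
      exact hux.trans (hxy'.trans hwy.symm)
    · obtain ⟨u, hu⟩ := hNc.nonempty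
      exact ⟨u, Or.inl hu⟩
  · -- vertex cover
    intro e he
    obtain ⟨x, hxe, hxN⟩ := hNcov e he
    exact ⟨x, hxe, Or.inl hxN⟩
  · exact fun u hu => Or.inl (hU hu)
  · -- T = G.edgeSet \ edgeSet
    ext e
    simp only [SimpleGraph.Subgraph.mem_edgeSet, Set.mem_diff]
    constructor
    · intro heT
      have heS : e ∈ S := hTS heT
      refine ⟨heS.1, ?_⟩
      induction e with
      | h a b =>
        rintro (h | ⟨-, hST⟩)
        · exact heS.2 h
        · exact hST.2 heT
    · rintro ⟨heG, hne⟩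
      by_contra heT
      have heS : e ∈ S := by
        refine ⟨heG, fun hN => ?_⟩
        induction e with
        | h a b => exact hne (Or.inl hN)
      induction e with
      | h a b =>
        exact hne (Or.inr ⟨heG, heS, heT⟩)
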